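/- arXiv:2304.07126 — 5 statements merged into one kernel-verified Lean document; each statement's English description precedes it below -/
import Mathlib

section
/- Let p be a prime, 2 ≤ k, and fix j with 2 ≤ j ≤ k. Let B_k be the k × k matrix over 𝔽_p with (a,b)-entry 1 if a = b or a = b + 1 and 0 otherwise, and for a row vector v ∈ 𝔽_p^k and 0 ≤ i < p let A_{v,i} denote the (k+1) × (k+1) block matrix [[1, v],[0ᵀ, B_k^i]]. If the row vector (1, 0) is fixed under right multiplication by A_{v,i} (i.e., (1,0)·A_{v,i} = (1,0)) and the row vector (1, e_j) is fixed under right multiplication by A_{v,i}, where e_j is the j-th standard basis vector of 𝔽_p^k, then v = 0 and i = 0, so A_{v,i} is the identity matrix. In other words, {(1,0), (1,e_j)} is a base for the group of all such matrices A_{v,i} acting on the set Ω = {(1, v) : v ∈ 𝔽_p^k} by right multiplication. -/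
lemma Bpow_entries {p k : ℕ} (B : Matrix (Fin k) (Fin k) (ZMod p))
    (hB : ∀ a b : Fin k, B a b =
      if a = b ∨ (a : ℕ) = (b : ℕ) + 1 then 1 else 0) (i : ℕ) :
    (∀ a b : Fin k, (a : ℕ) < (b : ℕ) → (B ^ i) a b = 0) ∧
    (∀ a : Fin k, (B ^ i) a a = 1) ∧
    (∀ a b : Fin k, (a : ℕ) = (b : ℕ) + 1 → (B ^ i) a b = (i : ZMod p)) := by
  induction i with
  | zero =>
    refine ⟨?_, ?_, ?_⟩
    · intro a b hab
      simp [Matrix.one_apply, (Fin.val_ne_iff.mp hab.ne)]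
    · intro a; simp
    · intro a b hab
      have : a ≠ b := Fin.val_ne_iff.mp (by omega)
      simp [Matrix.one_apply, this]
  | succ n ih =>
    obtain ⟨hup, hdiag, hsub⟩ := ih
    have key : ∀ a b : Fin k, (B ^ (n + 1)) a b = ∑ c, (B ^ n) a c * B c b := by
      intro a b; rw [pow_succ, Matrix.mul_apply]
    refine ⟨?_, ?_, ?_⟩
    · intro a b hab
      rw [key]
      apply Finset.sum_eq_zero
      intro c _
      rcases lt_or_ge (a : ℕ) (c : ℕ) with h | h
      · rw [hup a c h, zero_mul]
      · have h1 : c ≠ b := Fin.val_ne_iff.mp (by omega)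
        have h2 : (c : ℕ) ≠ (b : ℕ) + 1 := by omega
        rw [hB c b, if_neg (by tauto), mul_zero]
    · intro a
      rw [key]
      rw [Finset.sum_eq_single a]
      · rw [hdiag a, hB a a, if_pos (Or.inl rfl), one_mul]
      · intro c _ hc
        rcases lt_or_ge (a : ℕ) (c : ℕ) with h | h
        · rw [hup a c h, zero_mul]
        · have hc' : (c : ℕ) < (a : ℕ) := lt_of_le_of_ne h (Fin.val_ne_iff.mpr hc)
          have h1 : c ≠ a := hc
          have h2 : (c : ℕ) ≠ (a : ℕ) + 1 := by omega
          rw [hB c a, if_neg (by tauto), mul_zero]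
      · simp
    · intro a b hab
      rw [key]
      have hba : b ≠ a := Fin.val_ne_iff.mp (by omega)
      rw [← Finset.sum_erase_add _ _ (Finset.mem_univ a)]
      rw [Finset.sum_eq_single_of_mem b (Finset.mem_erase.mpr ⟨hba, Finset.mem_univ b⟩)]
      · rw [hsub a b hab, hB b b, if_pos (Or.inl rfl), mul_one,
          hdiag a, hB a b, if_pos (Or.inr hab), one_mul]
        push_cast; ring
      · intro c hc hcb
        have hca : c ≠ a := (Finset.mem_erase.mp hc).1
        rcases lt_or_ge (a : ℕ) (c : ℕ) with h | h
        · rw [hup a c h, zero_mul]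
        · have hc1 : (c : ℕ) < (a : ℕ) := lt_of_le_of_ne h (Fin.val_ne_iff.mpr hca)
          have h2 : (c : ℕ) ≠ (b : ℕ) + 1 := by omega
          have h1 : c ≠ b := hcb
          rw [hB c b, if_neg (by tauto), mul_zero]

/-- Fix a prime `p`, `2 ≤ k` and `j` with `2 ≤ j ≤ k` (here `j : Fin k` is the
0-indexed position, so `1 ≤ j` encodes a 1-indexed `j` with `2 ≤ j ≤ k`).
Let `B` be the lower bidiagonal matrix `B_k` over `𝔽_p`, and let
`A = A_{v,i} = [[1, v], [0ᵀ, B_k^i]]` with `0 ≤ i < p` and `v ∈ 𝔽_p^k`.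
If the row vectors `(1, 0)` and `(1, e_j)` are both fixed under right
multiplication by `A`, then `v = 0`, `i = 0` and `A` is the identity matrix;
i.e. `{(1,0), (1,e_j)}` is a base for the group `\overline{G_k(p)}`. -/
theorem base_for_Gkp_at_origin {p : ℕ} [Fact p.Prime] (k : ℕ) (hk : 2 ≤ k)
    (B : Matrix (Fin k) (Fin k) (ZMod p))
    (hB : ∀ a b : Fin k, B a b =
      if a = b ∨ (a : ℕ) = (b : ℕ) + 1 then 1 else 0)
    (j : Fin k) (hj : 1 ≤ (j : ℕ))
    (v : Fin k → ZMod p) (i : ℕ) (hi : i < p)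
    (A : Matrix (Fin (k + 1)) (Fin (k + 1)) (ZMod p))
    (hA : A = Matrix.of (Fin.cons (Fin.cons 1 v) (fun a : Fin k => Fin.cons 0 ((B ^ i) a))))
    (hfix0 : Matrix.vecMul (Fin.cons 1 0) A = Fin.cons 1 0)
    (hfixj : Matrix.vecMul (Fin.cons 1 (Pi.single j 1)) A = Fin.cons 1 (Pi.single j 1)) :
    v = 0 ∧ i = 0 ∧ A = 1 := by
  obtain ⟨hup, hdiag, hsub⟩ := Bpow_entries B hB i
  have hv : v = 0 := by
    funext b
    have h := congrFun hfix0 b.succ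
    simp [hA, Matrix.vecMul, dotProduct, Fin.sum_univ_succ] at h
    exact h
  have hrow : ∀ b : Fin k, (B ^ i) j b = (Pi.single j 1 : Fin k → ZMod p) b := by
    intro b
    have h := congrFun hfixj b.succ
    simp [hA, hv, Matrix.vecMul, dotProduct, Fin.sum_univ_succ,
      Pi.single_apply] at h
    simpa [Pi.single_apply] using h
  have hi0 : i = 0 := by
    have hjk : (j : ℕ) - 1 < k := by omega
    set b0 : Fin k := ⟨(j : ℕ) - 1, hjk⟩ with hb0
    have hjb : (j : ℕ) = (b0 : ℕ) + 1 := by simp [hb0]; omega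
    have h1 : (B ^ i) j b0 = (i : ZMod p) := hsub j b0 hjb
    have h2 : (Pi.single j 1 : Fin k → ZMod p) b0 = 0 := by
      apply Pi.single_eq_of_ne
      exact Fin.val_ne_iff.mp (by omega)
    have : (i : ZMod p) = 0 := by rw [← h1, hrow b0, h2]
    have hdvd : p ∣ i := (ZMod.natCast_eq_zero_iff i p).mp this
    exact Nat.eq_zero_of_dvd_of_lt hdvd hi
  have hA1 : A = 1 := by
    rw [hA, hv, hi0]
    ext a b
    refine Fin.cases ?_ ?_ a
    · refine Fin.cases ?_ ?_ b
      · simp [Matrix.one_apply]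
      · intro c; simp [Matrix.one_apply, (Fin.succ_ne_zero c).symm]
    · intro c
      refine Fin.cases ?_ ?_ b
      · simp [Matrix.one_apply, Fin.succ_ne_zero c]
      · intro d
        simp [Matrix.one_apply, Fin.succ_inj]
  exact ⟨hv, hi0, hA1⟩
end

section
/- Let p be a prime, 2 ≤ k, fix j with 2 ≤ j ≤ k, fix 0 ≤ i < p, and fix v ∈ 𝔽_p^k. Let b denote the row vector e_j·B_k^i (the j-th row of B_k^i). If a matrix A_{w,l} (with w ∈ 𝔽_p^k and 0 ≤ l < p) fixes both row vectors (1, v) and (1, v + b) under right multiplication, then w = 0 and l = 0, so A_{w,l} is the identity. In other words, the pair {(1, v), (1, v + e_j B_k^i)} is a base for the group \overline{G_k(p)} of all matrices A_{w,l} acting on Ω = {(1, u) : u ∈ 𝔽_p^k}. -/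
/-- Entries of powers of the lower bidiagonal matrix `B` are binomial
coefficients: `(B^m) a c = C(m, a-c)` for `c ≤ a`, and `0` otherwise. -/
lemma B_pow_apply_aux {p k : ℕ} (B : Matrix (Fin k) (Fin k) (ZMod p))
    (hB : ∀ a b : Fin k, B a b =
      if a = b ∨ (a : ℕ) = (b : ℕ) + 1 then 1 else 0) :
    ∀ (m : ℕ) (a c : Fin k), (B ^ m) a c =
      if (c : ℕ) ≤ (a : ℕ) then ((m.choose ((a : ℕ) - (c : ℕ)) : ℕ) : ZMod p) else 0 := by
  intro m
  induction m with
  | zero =>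
    intro a c
    simp only [pow_zero, Matrix.one_apply, Nat.choose]
    rcases Nat.lt_trichotomy (a : ℕ) (c : ℕ) with h | h | h
    · rw [if_neg (by simp [Fin.ext_iff]; omega), if_neg (by omega)]
    · have hac : a = c := Fin.ext h
      have h0 : (a : ℕ) - (c : ℕ) = 0 := by omega
      rw [if_pos hac, if_pos (by omega), h0]
      simp
    · rw [if_neg (by simp [Fin.ext_iff]; omega), if_pos (by omega),
        Nat.choose_eq_zero_of_lt (by omega)]
      simp
  | succ m ih =>
    intro a c
    rw [pow_succ, Matrix.mul_apply]
    have hsplit : ∀ d : Fin k, (B ^ m) a d * B d c =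
        (B ^ m) a d * (if d = c then 1 else 0) +
        (B ^ m) a d * (if (d : ℕ) = (c : ℕ) + 1 then 1 else 0) := by
      intro d
      rw [hB]
      by_cases h2 : d = c
      · have h3 : ¬ (d : ℕ) = (c : ℕ) + 1 := by subst h2; omega
        rw [if_pos (Or.inl h2), if_pos h2, if_neg h3]; ring
      · by_cases h3 : (d : ℕ) = (c : ℕ) + 1
        · rw [if_pos (Or.inr h3), if_neg h2, if_pos h3]; ring
        · rw [if_neg (by tauto), if_neg h2, if_neg h3]; ring
    simp only [hsplit, Finset.sum_add_distrib]
    have hsum1 : (∑ d : Fin k, (B ^ m) a d * (if d = c then 1 else 0)) = (B ^ m) a c := by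
      simp [mul_ite]
    have hsum2 : (∑ d : Fin k, (B ^ m) a d * (if (d : ℕ) = (c : ℕ) + 1 then 1 else 0)) =
        if h : (c : ℕ) + 1 < k then (B ^ m) a ⟨(c : ℕ) + 1, h⟩ else 0 := by
      split_ifs with h
      · have : ∀ d : Fin k, ((d : ℕ) = (c : ℕ) + 1) = (d = (⟨(c : ℕ) + 1, h⟩ : Fin k)) := by
          intro d; simp [Fin.ext_iff]
        simp only [this]
        simp [mul_ite]
      · have : ∀ d : Fin k, ¬ ((d : ℕ) = (c : ℕ) + 1) := by
          intro d hd; exact h (hd ▸ d.isLt)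
        simp [this]
    rw [hsum1, hsum2, ih]
    by_cases hca : (c : ℕ) ≤ (a : ℕ)
    · rw [if_pos hca, if_pos hca]
      by_cases hca1 : (c : ℕ) + 1 ≤ (a : ℕ)
      · have hck : (c : ℕ) + 1 < k := lt_of_le_of_lt hca1 a.isLt
        rw [dif_pos hck, ih]
        simp only [if_pos hca1]
        have h1 : (a : ℕ) - (c : ℕ) = ((a : ℕ) - ((c : ℕ) + 1)) + 1 := by omega
        rw [h1, Nat.choose_succ_succ]
        push_cast
        ring
      · have hac : (a : ℕ) = (c : ℕ) := by omega
        have h0 : (a : ℕ) - (c : ℕ) = 0 := by omega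
        rw [h0]
        have hz : (if h : (c : ℕ) + 1 < k then (B ^ m) a ⟨(c : ℕ) + 1, h⟩ else 0) = 0 := by
          split_ifs with h
          · rw [ih, if_neg (by simp; omega)]
          · rfl
        rw [hz]
        simp
    · rw [if_neg hca, if_neg hca]
      have hz : (if h : (c : ℕ) + 1 < k then (B ^ m) a ⟨(c : ℕ) + 1, h⟩ else 0) = 0 := by
        split_ifs with h
        · rw [ih, if_neg (by simp; omega)]
        · rfl
      rw [hz]
      simp

/-- Fix a prime `p`, `2 ≤ k`, a 1-indexed `j` with `2 ≤ j ≤ k` (encoded by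
`j : Fin k` with `1 ≤ j`), `0 ≤ i < p` and `v ∈ 𝔽_p^k`.  Let `b` be the
`j`-th row of `B_k^i`, i.e. `b = e_j · B_k^i`.  If a matrix
`A = A_{w,l} = [[1, w], [0ᵀ, B_k^l]]` (with `0 ≤ l < p`) fixes both row
vectors `(1, v)` and `(1, v + b)` under right multiplication, then `w = 0`,
`l = 0` and `A` is the identity; i.e. `{(1, v), (1, v + e_j B_k^i)}` is a base
for the group `\overline{G_k(p)}`. -/
theorem base_for_Gkp_general {p : ℕ} [Fact p.Prime] (k : ℕ) (hk : 2 ≤ k)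
    (B : Matrix (Fin k) (Fin k) (ZMod p))
    (hB : ∀ a b : Fin k, B a b =
      if a = b ∨ (a : ℕ) = (b : ℕ) + 1 then 1 else 0)
    (j : Fin k) (hj : 1 ≤ (j : ℕ))
    (i : ℕ) (hi : i < p) (v : Fin k → ZMod p)
    (b : Fin k → ZMod p) (hb : b = Matrix.vecMul (Pi.single j 1) (B ^ i))
    (w : Fin k → ZMod p) (l : ℕ) (hl : l < p)
    (A : Matrix (Fin (k + 1)) (Fin (k + 1)) (ZMod p))
    (hA : A = Matrix.of (Fin.cons (Fin.cons 1 w) (fun a : Fin k => Fin.cons 0 ((B ^ l) a))))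
    (hfixv : Matrix.vecMul (Fin.cons 1 v) A = Fin.cons 1 v)
    (hfixvb : Matrix.vecMul (Fin.cons 1 (v + b)) A = Fin.cons 1 (v + b)) :
    w = 0 ∧ l = 0 ∧ A = 1 := by
  have hBp := B_pow_apply_aux B hB
  -- computation of the action at successor coordinates
  have hvm : ∀ (u : Fin k → ZMod p) (c : Fin k),
      Matrix.vecMul (Fin.cons 1 u) A c.succ = w c + Matrix.vecMul u (B ^ l) c := by
    intro u c
    rw [hA]
    simp [Matrix.vecMul, dotProduct, Fin.sum_univ_succ]
  have h1 : ∀ c : Fin k, w c + Matrix.vecMul v (B ^ l) c = v c := by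
    intro c
    have := congrFun hfixv c.succ
    rwa [hvm, Fin.cons_succ] at this
  have h2 : ∀ c : Fin k, w c + Matrix.vecMul (v + b) (B ^ l) c = v c + b c := by
    intro c
    have := congrFun hfixvb c.succ
    rwa [hvm, Fin.cons_succ, Pi.add_apply] at this
  have key : ∀ c : Fin k, Matrix.vecMul b (B ^ l) c = b c := by
    intro c
    have ha := h2 c
    rw [Matrix.add_vecMul, Pi.add_apply] at ha
    have hb1 := h1 c
    linear_combination ha - hb1
  -- evaluate at coordinate j - 1
  have hjk : (j : ℕ) - 1 < k := by have := j.isLt; omega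
  set j' : Fin k := ⟨(j : ℕ) - 1, hjk⟩ with hj'
  have hrow : Matrix.vecMul b (B ^ l) = (B ^ (i + l)) j := by
    rw [hb, Matrix.vecMul_vecMul, ← pow_add, Matrix.single_one_vecMul]; rfl
  have hkey := key j'
  rw [hrow] at hkey
  have hbj' : b j' = ((i.choose 1 : ℕ) : ZMod p) := by
    rw [hb, Matrix.single_one_vecMul]
    show (B ^ i) j j' = _
    rw [hBp]
    have : (j : ℕ) - (j' : ℕ) = 1 := by simp only [hj']; omega
    rw [if_pos (by simp only [hj']; omega), this]
  have hBij : (B ^ (i + l)) j j' = (((i + l).choose 1 : ℕ) : ZMod p) := by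
    rw [hBp]
    have : (j : ℕ) - (j' : ℕ) = 1 := by simp only [hj']; omega
    rw [if_pos (by simp only [hj']; omega), this]
  rw [hBij, hbj'] at hkey
  simp only [Nat.choose_one_right] at hkey
  have hlz : ((l : ℕ) : ZMod p) = 0 := by
    push_cast at hkey
    linear_combination hkey
  have hl0 : l = 0 := by
    have hdvd : p ∣ l := (ZMod.natCast_eq_zero_iff l p).mp hlz
    rcases Nat.eq_zero_or_pos l with h | h
    · exact h
    · exact absurd (Nat.le_of_dvd h hdvd) (by omega)
  subst hl0
  have hw : w = 0 := by
    funext c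
    have := h1 c
    rw [pow_zero, Matrix.vecMul_one] at this
    simpa using this
  refine ⟨hw, rfl, ?_⟩
  rw [hA, hw]
  ext x y
  refine Fin.cases ?_ (fun a => ?_) x
  · refine Fin.cases ?_ (fun c => ?_) y
    · simp [Matrix.one_apply]
    · simp [Matrix.one_apply, eq_comm, Fin.succ_ne_zero]
  · refine Fin.cases ?_ (fun c => ?_) y
    · simp [Matrix.one_apply, Fin.succ_ne_zero]
    · simp [Matrix.one_apply, Fin.succ_inj]
end

section
/- Let p be a prime and k ≥ 2, and let B_k be the k × k matrix over 𝔽_p with (a,b)-entry 1 if a = b or a = b + 1 and 0 otherwise. Define a simple graph Γ on vertex set 𝔽_p^k by joining u and w whenever u ≠ w and w − u = ± e_j · B_k^i for some 2 ≤ j ≤ k and 0 ≤ i < p. Then Γ is connected. (This graph contains the Saxl graph of the group \overline{G_k(p)} acting on Ω ≅ 𝔽_p^k as a spanning subgraph, so the Saxl graph of \overline{G_k(p)} is connected.) -/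
/-- For a prime `p` and `k ≥ 2`, the graph on vertex set `𝔽_p^k` in which `u`
and `w` are joined whenever `u ≠ w` and `w − u = ± e_j · B_k^i` for some
`2 ≤ j ≤ k` (encoded by `j : Fin k` with `1 ≤ j`) and `0 ≤ i < p` is
connected.  (This graph is a spanning subgraph of the Saxl graph of
`\overline{G_k(p)}`, so the Saxl graph is connected.) -/
theorem saxl_subgraph_connected {p : ℕ} [Fact p.Prime] (k : ℕ) (hk : 2 ≤ k)
    (B : Matrix (Fin k) (Fin k) (ZMod p))
    (hB : ∀ a b : Fin k, B a b =
      if a = b ∨ (a : ℕ) = (b : ℕ) + 1 then 1 else 0) :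
    (SimpleGraph.fromRel (fun u w : Fin k → ZMod p =>
      ∃ j : Fin k, 1 ≤ (j : ℕ) ∧ ∃ i : ℕ, i < p ∧
        w - u = Matrix.vecMul (Pi.single j 1) (B ^ i))).Connected := by
  set G := SimpleGraph.fromRel (fun u w : Fin k → ZMod p =>
      ∃ j : Fin k, 1 ≤ (j : ℕ) ∧ ∃ i : ℕ, i < p ∧
        w - u = Matrix.vecMul (Pi.single j 1) (B ^ i)) with hG
  have hp : 1 < p := (Fact.out : p.Prime).one_lt
  have step : ∀ (u : Fin k → ZMod p) (j : Fin k), 1 ≤ (j : ℕ) → ∀ i : ℕ, i < p →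
      G.Reachable u (u + Matrix.vecMul (Pi.single j 1) (B ^ i)) := by
    intro u j hj i hi
    by_cases h : Matrix.vecMul (Pi.single j 1) (B ^ i) = 0
    · rw [h, add_zero]
    · refine SimpleGraph.Adj.reachable ?_
      rw [hG, SimpleGraph.fromRel_adj]
      exact ⟨fun he => h ((left_eq_add).mp he), Or.inl ⟨j, hj, i, hi, by abel⟩⟩
  have stepsN : ∀ (n : ℕ) (u : Fin k → ZMod p) (j : Fin k), 1 ≤ (j : ℕ) → ∀ i : ℕ, i < p →
      G.Reachable u (u + n • Matrix.vecMul (Pi.single j 1) (B ^ i)) := by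
    intro n
    induction n with
    | zero =>
        intro u j hj i hi
        simp only [zero_smul, add_zero]
        exact SimpleGraph.Reachable.refl u
    | succ n ih =>
        intro u j hj i hi
        rw [succ_nsmul, ← add_assoc]
        exact (ih u j hj i hi).trans (step _ j hj i hi)
  have stepsZ : ∀ (c : ZMod p) (u : Fin k → ZMod p) (j : Fin k), 1 ≤ (j : ℕ) → ∀ i : ℕ, i < p →
      G.Reachable u (u + c • Matrix.vecMul (Pi.single j 1) (B ^ i)) := by
    intro c u j hj i hi
    have hc : c • Matrix.vecMul (Pi.single j 1) (B ^ i)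
        = c.val • Matrix.vecMul (Pi.single j 1) (B ^ i) := by
      rw [← Nat.cast_smul_eq_nsmul (ZMod p), ZMod.natCast_val, ZMod.cast_id]
    rw [hc]
    exact stepsN c.val u j hj i hi
  have coord : ∀ (u : Fin k → ZMod p) (m : Fin k) (c : ZMod p),
      G.Reachable u (u + c • (Pi.single m 1 : Fin k → ZMod p)) := by
    intro u m c
    by_cases hm : 1 ≤ (m : ℕ)
    · have h := stepsZ c u m hm 0 (by omega)
      rwa [pow_zero, Matrix.vecMul_one] at h
    · have hm0 : (m : ℕ) = 0 := by omega
      set j1 : Fin k := ⟨1, by omega⟩ with hj1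
      have hj1m : j1 ≠ m := by
        intro h
        have h' : (j1 : ℕ) = (m : ℕ) := congrArg Fin.val h
        rw [hm0] at h'
        simp [hj1] at h'
      have hrow : Matrix.vecMul (Pi.single j1 (1 : ZMod p)) (B ^ 1)
          = (Pi.single m 1 : Fin k → ZMod p) + Pi.single j1 1 := by
        funext b
        rw [pow_one]
        have hv : Matrix.vecMul (Pi.single j1 (1 : ZMod p)) B b = B j1 b := by
          simp [Matrix.vecMul, dotProduct, Pi.single_apply]
        rw [hv, hB]
        by_cases hbm : b = m
        · subst hbm
          simp [Pi.single_apply, hm0, Ne.symm hj1m]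
          exact fun _ => rfl
        · by_cases hbj : b = j1
          · subst hbj
            simp [Pi.single_apply, hbm]
          · have h1 : j1 ≠ b := fun h => hbj h.symm
            have h2 : (j1 : ℕ) ≠ (b : ℕ) + 1 := by
              intro h
              apply hbm
              have : (b : ℕ) = (m : ℕ) := by simp [hj1] at h; omega
              exact Fin.ext this
            have h3 : b ≠ m := hbm
            simp [Pi.single_apply, h1, h2, h3, hbj]
      have r1 := stepsZ c u j1 (by simp [hj1]) 1 hp
      have r2 := stepsZ (-c) (u + c • Matrix.vecMul (Pi.single j1 1) (B ^ 1)) j1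
        (by simp [hj1]) 0 (by omega)
      rw [pow_zero, Matrix.vecMul_one] at r2
      have key : u + c • Matrix.vecMul (Pi.single j1 (1 : ZMod p)) (B ^ 1)
            + (-c) • (Pi.single j1 1 : Fin k → ZMod p)
          = u + c • (Pi.single m 1 : Fin k → ZMod p) := by
        rw [hrow]; module
      rw [key] at r2
      exact r1.trans r2
  have sums : ∀ (s : Finset (Fin k)) (u : Fin k → ZMod p) (c : Fin k → ZMod p),
      G.Reachable u (u + ∑ m ∈ s, c m • (Pi.single m 1 : Fin k → ZMod p)) := by
    intro s
    induction s using Finset.induction_on with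
    | empty =>
        intro u c
        simp only [Finset.sum_empty, add_zero]
        exact SimpleGraph.Reachable.refl u
    | @insert a s ha ih =>
        intro u c
        rw [Finset.sum_insert ha, ← add_assoc]
        exact (coord u a (c a)).trans (ih _ c)
  constructor
  · intro u w
    have h := sums Finset.univ u (fun m => (w - u) m)
    have heq : u + ∑ m : Fin k, (w - u) m • (Pi.single m 1 : Fin k → ZMod p) = w := by
      have h2 : ∑ m : Fin k, (w - u) m • (Pi.single m 1 : Fin k → ZMod p)
          = ∑ m : Fin k, Pi.single m ((w - u) m) := by
        refine Finset.sum_congr rfl fun m _ => ?_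
        rw [← Pi.single_smul, smul_eq_mul, mul_one]
      rw [h2, Finset.univ_sum_single]
      abel
    rwa [heq] at h
end

section
/- Let G be a group acting on a finite set Ω of size n, let λ ≥ 1, let r be a natural number, and set r' = ⌊r/λ⌋. Let 𝒰 be an uncovering-by-bases of strength r' for G. Suppose E ⊆ {1, …, λ} × Ω is a set of 'error positions' with |E| ≤ r. Then there exist a component index i ∈ {1, …, λ} and a base B ∈ 𝒰 such that B is disjoint from {x ∈ Ω : (i, x) ∈ E}. (This is the correctness guarantee for the decoding algorithm for twisted permutation codes: if a received word contains at most r_tw errors, some component contains at most r' errors, and some base in the UBB avoids all error positions of that component, so the algorithm is guaranteed to decode successfully.) -/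
/-- Correctness guarantee for the decoding algorithm: let `G` act on a finite
set `Ω`, let `l ≥ 1` (the number of components), `r` a natural number, and let
`𝒰` be an uncovering-by-bases of strength `r' = ⌊r / l⌋` for `G`.  If
`E ⊆ Fin l × Ω` is a set of error positions with `|E| ≤ r`, then there is a
component `i` and a base `B ∈ 𝒰` disjoint from the error positions of
component `i`. -/
theorem decoding_algorithm_correctness {G Ω : Type*} [Group G] [MulAction G Ω]
    [Fintype Ω] (l r : ℕ) (hl : 1 ≤ l) (𝒰 : Set (Set Ω))
    (hbases : ∀ B ∈ 𝒰, ∀ g : G, (∀ x ∈ B, g • x = x) → g = 1)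
    (hucov : ∀ S : Set Ω, S.ncard ≤ r / l → ∃ B ∈ 𝒰, Disjoint S B)
    (E : Set (Fin l × Ω)) (hE : E.ncard ≤ r) :
    ∃ i : Fin l, ∃ B ∈ 𝒰, Disjoint {x : Ω | (i, x) ∈ E} B := by
  haveI : DecidableEq Ω := Classical.decEq Ω
  haveI : DecidablePred (· ∈ E) := Classical.decPred _
  -- it suffices to find a component with few errors
  suffices h : ∃ i : Fin l, {x : Ω | (i, x) ∈ E}.ncard ≤ r / l by
    obtain ⟨i, hi⟩ := h
    exact ⟨i, hucov _ hi⟩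
  by_contra hcon
  push_neg at hcon
  -- translate to finsets
  set F : Finset (Fin l × Ω) := E.toFinset with hF
  have hsum : F.card = ∑ i : Fin l, (F.filter (fun p => p.1 = i)).card :=
    Finset.card_eq_sum_card_fiberwise (fun p _ => Finset.mem_univ p.1)
  have hfib : ∀ i : Fin l, {x : Ω | (i, x) ∈ E}.ncard
      = (F.filter (fun p => p.1 = i)).card := by
    intro i
    have : {x : Ω | (i, x) ∈ E}.ncard = {x : Ω | (i, x) ∈ E}.toFinset.card :=
      Set.ncard_eq_toFinset_card' _
    rw [this]
    apply Finset.card_bij (fun x _ => (i, x))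
    · intro x hx
      simp only [Set.mem_toFinset, Set.mem_setOf_eq] at hx
      simp [hF, hx]
    · intro a ha b hb hab
      simpa using congrArg Prod.snd hab
    · intro p hp
      simp only [Finset.mem_filter, hF, Set.mem_toFinset] at hp
      refine ⟨p.2, ?_, ?_⟩
      · simp only [Set.mem_toFinset, Set.mem_setOf_eq]
        rw [show (i, p.2) = p by rw [← hp.2]]
        exact hp.1
      · rw [← hp.2]
  have hbig : ∀ i : Fin l, r / l + 1 ≤ (F.filter (fun p => p.1 = i)).card := by
    intro i
    have := hcon i
    rw [hfib i] at this
    omega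
  have hcard : E.ncard = F.card := Set.ncard_eq_toFinset_card' _
  have : l * (r / l + 1) ≤ F.card := by
    calc l * (r / l + 1) = ∑ _i : Fin l, (r / l + 1) := by
          simp [Finset.sum_const, mul_comm]
      _ ≤ ∑ i : Fin l, (F.filter (fun p => p.1 = i)).card :=
          Finset.sum_le_sum (fun i _ => hbig i)
      _ = F.card := hsum.symm
  have hr : r < (r / l + 1) * l :=
    (Nat.div_lt_iff_lt_mul (by omega)).mp (Nat.lt_succ_self _)
  have hlt : r < F.card := lt_of_lt_of_le (by rwa [mul_comm] at hr) this
  omega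
end

section
/- Let F be a finite field of characteristic 2, let A ∈ SL(2, F), and let b ∈ F². Define g : F² → F² by g(x) = A·x + b, and suppose g has exactly |F| fixed points (the maximum possible for a non-identity element). Then g has order 2, i.e., g(g(x)) = x for all x ∈ F². (This is part of the argument that in ASL(2, 2^m) every element with 2^m fixed points has order 2, used to show that twisting cannot improve the minimum distance for ASL(2, 2^m).) -/
/-- Let `F` be a finite field of characteristic 2, `A ∈ SL(2, F)` and
`b ∈ F²`, and let `g : F² → F²` be the affine map `g x = A·x + b`.  If `g` has
exactly `|F|` fixed points (the maximum possible for a non-identity element),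
then `g` has order 2: `g (g x) = x` for all `x`. -/
theorem asl2_max_fixed_points_order_two {F : Type*} [Field F] [Fintype F]
    [CharP F 2] (A : Matrix.SpecialLinearGroup (Fin 2) F) (b : Fin 2 → F)
    (g : (Fin 2 → F) → (Fin 2 → F))
    (hg : ∀ x, g x = (A : Matrix (Fin 2) (Fin 2) F).mulVec x + b)
    (hfix : {x : Fin 2 → F | g x = x}.ncard = Fintype.card F) :
    ∀ x, g (g x) = x := by
  set M : Matrix (Fin 2) (Fin 2) F := (A : Matrix (Fin 2) (Fin 2) F) with hM
  have h2 : (2 : F) = 0 := CharTwo.two_eq_zero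
  have hdet : M.det = 1 := A.2
  have hcard : 1 < Fintype.card F := Fintype.one_lt_card
  -- the fixed point set has at least two elements
  have hfin : ({x : Fin 2 → F | g x = x}).Finite := Set.toFinite _
  have h2card : 1 < ({x : Fin 2 → F | g x = x}).ncard := by omega
  obtain ⟨x₀, y₀, hx₀, hy₀, hne⟩ := (Set.one_lt_ncard_iff hfin).mp h2card
  have hx₀' : M.mulVec x₀ + b = x₀ := by rw [← hg]; exact hx₀
  have hy₀' : M.mulVec y₀ + b = y₀ := by rw [← hg]; exact hy₀
  have h1 : M.mulVec x₀ - x₀ = -b := by linear_combination hx₀'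
  have h1' : M.mulVec y₀ - y₀ = -b := by linear_combination hy₀'
  -- det (M - 1) = 0
  have hker : (M - 1).mulVec (x₀ - y₀) = 0 := by
    simp only [Matrix.sub_mulVec, Matrix.mulVec_sub, Matrix.one_mulVec]
    linear_combination h1 - h1'
  have hdet1 : (M - 1).det = 0 := by
    rw [← Matrix.exists_mulVec_eq_zero_iff]
    exact ⟨x₀ - y₀, sub_ne_zero_of_ne hne, hker⟩
  -- trace is zero
  have hdetM : M 0 0 * M 1 1 - M 0 1 * M 1 0 = 1 := by
    rw [← Matrix.det_fin_two]; exact hdet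
  have htr : M 0 0 + M 1 1 = 0 := by
    simp [Matrix.det_fin_two, Matrix.sub_apply, Matrix.one_apply] at hdet1
    linear_combination hdetM - hdet1 + h2
  -- M * M = 1
  have hMM : M * M = 1 := by
    ext i j
    fin_cases i <;> fin_cases j <;>
      simp [Matrix.mul_apply, Fin.sum_univ_two, Matrix.one_apply] <;>
      first
        | linear_combination hdetM + (M 1 1) * htr + (M 0 1 * M 1 0 - M 0 0 * M 1 1) * h2
        | linear_combination (M 0 1) * htr
        | linear_combination (M 1 0) * htr
        | linear_combination hdetM + (M 0 0) * htr + (M 0 1 * M 1 0 - M 0 0 * M 1 1) * h2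
  -- conclude
  have hb : M.mulVec b + b = 0 := by
    have hbx : b = x₀ - M.mulVec x₀ := by linear_combination hx₀'
    rw [hbx, Matrix.mulVec_sub, Matrix.mulVec_mulVec, hMM, Matrix.one_mulVec]
    abel
  intro x
  rw [hg, hg, Matrix.mulVec_add, Matrix.mulVec_mulVec, hMM, Matrix.one_mulVec,
    add_assoc, hb, add_zero]
end
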